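/- Let q be the concave dual function of a convex problem with optimal value f* = q(λ*). Suppose a sequence {z_k} in C satisfies L(z_{k+1}, λ_k) ≤ q(λ_k) + 2ε for all k, where λ_{k+1} = [λ_k + α g(z_{k+1})]^{[0,λ̄]} and λ̄ ≥ ‖λ*‖_∞. Then for the running average λ°_k = (1/k)∑_{i=1}^k λ_i, it holds that q(λ°_k) ≥ f* − m·λ̄²/(αk) − (α/2)·m·ḡ² − 2ε. -/

import Mathlib

private lemma clamp_sq_le (x y lb : ℝ) (hy0 : 0 ≤ y) (hyl : y ≤ lb) :
    (min (max x 0) lb - y) ^ 2 ≤ (x - y) ^ 2 := by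
  rcases le_total x 0 with h | h
  · rw [max_eq_right h, min_eq_left (le_trans hy0 hyl)]
    nlinarith
  · rw [max_eq_left h]
    rcases le_total x lb with h' | h'
    · rw [min_eq_left h']
    · rw [min_eq_right h']
      nlinarith

/-- With the truncated dual update and approximately-minimising primal points, the dual
value at the running average of multipliers satisfies
`q(λ°_k) ≥ f* - m λ̄²/(α k) - (α/2) m ḡ² - 2ε`. -/
theorem dual_average_lower_bound {n m : ℕ} (C : Set (EuclideanSpace ℝ (Fin n)))
    (hCc : IsCompact C) (hCconv : Convex ℝ C) (hCne : C.Nonempty)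
    (f : EuclideanSpace ℝ (Fin n) → ℝ)
    (hf : ConvexOn ℝ C f) (hfc : ContinuousOn f C)
    (g : Fin m → EuclideanSpace ℝ (Fin n) → ℝ)
    (hg : ∀ j, ConvexOn ℝ C (g j)) (hgc : ∀ j, ContinuousOn (g j) C)
    (q : EuclideanSpace ℝ (Fin m) → ℝ)
    (hq : ∀ lam, q lam = sInf ((fun w => f w + ∑ j, lam j * g j w) '' C))
    (lamstar : EuclideanSpace ℝ (Fin m)) (hlamstar0 : ∀ j, 0 ≤ lamstar j)
    (hlamstar : ∀ lam : EuclideanSpace ℝ (Fin m), (∀ j, 0 ≤ lam j) → q lam ≤ q lamstar)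
    (ε α lambar gbar : ℝ) (hε : 0 ≤ ε) (hα : 0 < α)
    (hlambar : ∀ j, |lamstar j| ≤ lambar)
    (hgbar : ∀ w ∈ C, ∀ j, |g j w| ≤ gbar)
    (z : ℕ → EuclideanSpace ℝ (Fin n)) (hzC : ∀ k, z k ∈ C)
    (lam : ℕ → EuclideanSpace ℝ (Fin m))
    (hlam1 : ∀ j, lam 1 j ∈ Set.Icc (0:ℝ) lambar)
    (hupd : ∀ k ≥ 1, ∀ j,
      lam (k + 1) j = min (max (lam k j + α * g j (z (k + 1))) 0) lambar)
    (hdescent : ∀ k ≥ 1,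
      f (z (k + 1)) + ∑ j, lam k j * g j (z (k + 1)) ≤ q (lam k) + 2 * ε) :
    ∀ k : ℕ, k ≥ 1 →
      q ((k:ℝ)⁻¹ • ∑ i ∈ Finset.Icc 1 k, lam i)
        ≥ q lamstar - m * lambar ^ 2 / (α * k) - α / 2 * m * gbar ^ 2 - 2 * ε := by
  have hcont : ∀ lm : EuclideanSpace ℝ (Fin m),
      ContinuousOn (fun w => f w + ∑ j, lm j * g j w) C := fun lm =>
    hfc.add (continuousOn_finset_sum _ fun j _ => continuousOn_const.mul (hgc j))
  have hbdd : ∀ lm : EuclideanSpace ℝ (Fin m),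
      BddBelow ((fun w => f w + ∑ j, lm j * g j w) '' C) := fun lm =>
    (hCc.image_of_continuousOn (hcont lm)).bddBelow
  have hqle : ∀ lm : EuclideanSpace ℝ (Fin m), ∀ w ∈ C,
      q lm ≤ f w + ∑ j, lm j * g j w := by
    intro lm w hw
    rw [hq]
    exact csInf_le (hbdd lm) ⟨w, hw, rfl⟩
  have hleq : ∀ lm : EuclideanSpace ℝ (Fin m), ∀ b : ℝ,
      (∀ w ∈ C, b ≤ f w + ∑ j, lm j * g j w) → b ≤ q lm := by
    intro lm b h
    rw [hq]
    exact le_csInf (hCne.image _) (by rintro x ⟨w, hw, rfl⟩; exact h w hw)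
  set D : ℕ → ℝ := fun i => ∑ j, (lam i j - lamstar j) ^ 2 with hD
  have hstar_le : ∀ j, lamstar j ≤ lambar := fun j => (abs_le.mp (hlambar j)).2
  have hgsq : ∀ w ∈ C, ∀ j, (g j w) ^ 2 ≤ gbar ^ 2 := by
    intro w hw j
    have := abs_le.mp (hgbar w hw j)
    nlinarith [this.1, this.2]
  -- one-step inequality
  have step : ∀ i ≥ 1,
      D (i + 1) ≤ D i + 2 * α * (q (lam i) + 2 * ε - q lamstar) + α ^ 2 * m * gbar ^ 2 := by
    intro i hi
    have h1 : D (i + 1) ≤ ∑ j, (lam i j + α * g j (z (i + 1)) - lamstar j) ^ 2 := by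
      apply Finset.sum_le_sum
      intro j _
      rw [hupd i hi j]
      exact clamp_sq_le _ _ _ (hlamstar0 j) (hstar_le j)
    have h2 : ∑ j, (lam i j + α * g j (z (i + 1)) - lamstar j) ^ 2
        = D i + 2 * α * (∑ j, (lam i j - lamstar j) * g j (z (i + 1)))
          + α ^ 2 * ∑ j, (g j (z (i + 1))) ^ 2 := by
      simp only [hD, Finset.mul_sum, ← Finset.sum_add_distrib]
      apply Finset.sum_congr rfl
      intro j _
      ring
    have h3 : ∑ j, (lam i j - lamstar j) * g j (z (i + 1))
        ≤ q (lam i) + 2 * ε - q lamstar := by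
      have ha := hdescent i hi
      have hb := hqle lamstar (z (i + 1)) (hzC (i + 1))
      have heq : ∑ j, (lam i j - lamstar j) * g j (z (i + 1))
          = (∑ j, lam i j * g j (z (i + 1))) - ∑ j, lamstar j * g j (z (i + 1)) := by
        rw [← Finset.sum_sub_distrib]
        apply Finset.sum_congr rfl
        intro j _
        ring
      linarith
    have h4 : ∑ j, (g j (z (i + 1))) ^ 2 ≤ (m : ℝ) * gbar ^ 2 := by
      calc ∑ j, (g j (z (i + 1))) ^ 2 ≤ ∑ _j : Fin m, gbar ^ 2 :=
            Finset.sum_le_sum fun j _ => hgsq _ (hzC _) j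
        _ = (m : ℝ) * gbar ^ 2 := by simp [Finset.sum_const, mul_comm]
    have hα2 : (0:ℝ) ≤ 2 * α := by linarith
    have hα2' : (0:ℝ) ≤ α ^ 2 := sq_nonneg α
    nlinarith [mul_le_mul_of_nonneg_left h3 hα2, mul_le_mul_of_nonneg_left h4 hα2']
  -- telescoping
  have tele : ∀ K : ℕ, D (K + 1) ≤ D 1 +
      ∑ i ∈ Finset.Icc 1 K, (2 * α * (q (lam i) + 2 * ε - q lamstar) + α ^ 2 * m * gbar ^ 2) := by
    intro K
    induction K with
    | zero => simp
    | succ K ih =>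
      have hs := step (K + 1) (by omega)
      rw [Finset.sum_Icc_succ_top (by omega : 1 ≤ K + 1)]
      linarith
  have hD1 : D 1 ≤ (m : ℝ) * lambar ^ 2 := by
    calc D 1 ≤ ∑ _j : Fin m, lambar ^ 2 := by
          apply Finset.sum_le_sum
          intro j _
          have h1 := hlam1 j
          have h2 := hlamstar0 j
          have h3 := hstar_le j
          nlinarith [h1.1, h1.2]
      _ = (m : ℝ) * lambar ^ 2 := by simp [Finset.sum_const, mul_comm]
  intro k hk
  have hk0 : (0:ℝ) < (k : ℝ) := by exact_mod_cast hk
  have hDpos : 0 ≤ D (k + 1) := Finset.sum_nonneg fun j _ => sq_nonneg _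
  have hcard : (Finset.Icc 1 k).card = k := by
    rw [Nat.card_Icc]; omega
  have hsum : ∑ i ∈ Finset.Icc 1 k,
      (2 * α * (q (lam i) + 2 * ε - q lamstar) + α ^ 2 * m * gbar ^ 2)
      = 2 * α * (∑ i ∈ Finset.Icc 1 k, q (lam i))
        + (k : ℝ) * (2 * α * (2 * ε - q lamstar) + α ^ 2 * m * gbar ^ 2) := by
    simp only [show ∀ a : ℝ, 2 * α * (a + 2 * ε - q lamstar) + α ^ 2 * m * gbar ^ 2
        = 2 * α * a + (2 * α * (2 * ε - q lamstar) + α ^ 2 * m * gbar ^ 2) from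
        fun a => by ring, Finset.sum_add_distrib, Finset.sum_const, hcard,
      nsmul_eq_mul, ← Finset.mul_sum]
    ring
  -- lower bound on the sum of dual values
  have key : (k : ℝ) * q lamstar - (∑ i ∈ Finset.Icc 1 k, q (lam i))
      ≤ (m : ℝ) * lambar ^ 2 / (2 * α) + (k : ℝ) * (α / 2 * m * gbar ^ 2 + 2 * ε) := by
    have h := tele k
    rw [hsum] at h
    have h0 : (0:ℝ) ≤ D (k + 1) := hDpos
    have h2α : (0:ℝ) < 2 * α := by linarith
    rw [div_add' _ _ _ (ne_of_gt h2α), le_div_iff₀ h2α] at *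
    nlinarith [h, h0, hD1]
  -- concavity: q at the average dominates the average of q values
  have havg : (k : ℝ)⁻¹ * (∑ i ∈ Finset.Icc 1 k, q (lam i))
      ≤ q ((k:ℝ)⁻¹ • ∑ i ∈ Finset.Icc 1 k, lam i) := by
    apply hleq
    intro w hw
    have happly : ∀ j, ((k:ℝ)⁻¹ • ∑ i ∈ Finset.Icc 1 k, lam i) j
        = (k:ℝ)⁻¹ * ∑ i ∈ Finset.Icc 1 k, lam i j := by
      intro j
      have := Finset.sum_apply j (Finset.Icc 1 k) fun i => lam i
      simp only [PiLp.smul_apply, smul_eq_mul, WithLp.ofLp_sum, this]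
    have hrhs : f w + ∑ j, ((k:ℝ)⁻¹ • ∑ i ∈ Finset.Icc 1 k, lam i) j * g j w
        = (k:ℝ)⁻¹ * ∑ i ∈ Finset.Icc 1 k, (f w + ∑ j, lam i j * g j w) := by
      simp only [happly]
      rw [Finset.sum_add_distrib, Finset.sum_const, hcard, nsmul_eq_mul, mul_add,
        ← mul_assoc, inv_mul_cancel₀ (ne_of_gt hk0), one_mul]
      congr 1
      rw [Finset.sum_comm, Finset.mul_sum]
      apply Finset.sum_congr rfl
      intro j _
      rw [← Finset.sum_mul]
      ring
    rw [hrhs]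
    apply mul_le_mul_of_nonneg_left _ (by positivity)
    exact Finset.sum_le_sum fun i _ => hqle (lam i) w hw
  set Qa := q ((k:ℝ)⁻¹ • ∑ i ∈ Finset.Icc 1 k, lam i) with hQa
  have hq_sum_le : (k : ℝ) * q lamstar - (k : ℝ) * Qa
      ≤ (m : ℝ) * lambar ^ 2 / (2 * α) + (k : ℝ) * (α / 2 * m * gbar ^ 2 + 2 * ε) := by
    have h1 : (∑ i ∈ Finset.Icc 1 k, q (lam i)) ≤ (k : ℝ) * Qa := by
      have := mul_le_mul_of_nonneg_left havg (le_of_lt hk0)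
      rwa [← mul_assoc, mul_inv_cancel₀ (ne_of_gt hk0), one_mul] at this
    linarith
  have hml : (0:ℝ) ≤ (m : ℝ) * lambar ^ 2 := by positivity
  have hM2 : (m:ℝ) * lambar ^ 2 / (2 * α) ≤ (m:ℝ) * lambar ^ 2 / α := by
    rw [div_le_div_iff₀ (by linarith) hα]
    nlinarith [hml]
  have hkM : (k:ℝ) * ((m:ℝ) * lambar ^ 2 / (α * k)) = (m:ℝ) * lambar ^ 2 / α := by
    field_simp
  have hiff : (k:ℝ) * (q lamstar - Qa)
      ≤ (k:ℝ) * ((m:ℝ) * lambar ^ 2 / (α * k) + (α / 2 * m * gbar ^ 2 + 2 * ε)) := by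
    rw [mul_sub, mul_add, hkM]
    linarith
  have hfinal := le_of_mul_le_mul_left hiff hk0
  linarith
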